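/- Let a and b be coprime positive integers and k ≥ 1. Then the sum of all elements of R_k(a,b) equals (1/2)·ab·(2abk - a - b); that is, 2·∑_{j ∈ R_k(a,b)} j = ab(2abk - a - b). -/

import Mathlib

/-- `repCount a b j` is the number of representations of `j` in the form
`m * a + n * b` with `m, n : ℕ`. -/
noncomputable def repCount (a b j : ℕ) : ℕ :=
  Nat.card {p : ℕ × ℕ // p.1 * a + p.2 * b = j}

lemma key_facts {a b : ℕ} (ha : 0 < a) (hb : 0 < b) (hab : Nat.Coprime a b)
    {m n m₀ s t : ℕ} (hm₀ : m₀ < b) (hs : s < a)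
    (h : m * a + n * b = m₀ * a + s * b + t * (a * b)) :
    m % b = m₀ ∧ n % a = s ∧ m / b + n / a = t := by
  have h1 : m % b = m₀ := by
    have h' : m * a + n * b = m₀ * a + (s + t * a) * b := by rw [h]; ring
    have hme : m * a ≡ m₀ * a [MOD b] := by
      have := congrArg (· % b) h'
      simpa [Nat.ModEq, Nat.add_mul_mod_self_right] using this
    calc m % b = m₀ % b := Nat.ModEq.cancel_right_of_coprime hab.symm hme
      _ = m₀ := Nat.mod_eq_of_lt hm₀
  have h2 : n % a = s := by
    have h' : n * b + m * a = s * b + (m₀ + t * b) * a := by rw [add_comm (n*b), h]; ring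
    have hme : n * b ≡ s * b [MOD a] := by
      have := congrArg (· % a) h'
      simpa [Nat.ModEq, Nat.add_mul_mod_self_right] using this
    calc n % a = s % a := Nat.ModEq.cancel_right_of_coprime hab hme
      _ = s := Nat.mod_eq_of_lt hs
  refine ⟨h1, h2, ?_⟩
  obtain ⟨q, hq⟩ : ∃ q, m = m₀ + q * b := ⟨m / b, by
    conv_lhs => rw [← Nat.div_add_mod m b, h1]
    ring⟩
  obtain ⟨r, hr⟩ : ∃ r, n = s + r * a := ⟨n / a, by
    conv_lhs => rw [← Nat.div_add_mod n a, h2]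
    ring⟩
  have hqd : m / b = q := by rw [hq, Nat.add_mul_div_right _ _ hb, Nat.div_eq_of_lt hm₀, zero_add]
  have hrd : n / a = r := by rw [hr, Nat.add_mul_div_right _ _ ha, Nat.div_eq_of_lt hs, zero_add]
  rw [hqd, hrd]
  subst hq hr
  have hc : (q + r) * (a * b) = t * (a * b) := by zify at h ⊢; linear_combination h
  exact Nat.eq_of_mul_eq_mul_right (Nat.mul_pos ha hb) hc

lemma repCount_eq {a b : ℕ} (ha : 0 < a) (hb : 0 < b) (hab : Nat.Coprime a b)
    {m₀ s : ℕ} (t : ℕ) (hm₀ : m₀ < b) (hs : s < a) :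
    repCount a b (m₀ * a + s * b + t * (a * b)) = t + 1 := by
  have e : {p : ℕ × ℕ // p.1 * a + p.2 * b = m₀ * a + s * b + t * (a * b)} ≃ Fin (t + 1) :=
    { toFun := fun p => ⟨p.1.1 / b, by
        obtain ⟨h1, h2, h3⟩ := key_facts ha hb hab hm₀ hs p.2
        exact Nat.lt_succ_of_le (le_of_le_of_eq (Nat.le_add_right _ _) h3)⟩
      invFun := fun i => ⟨(m₀ + i.1 * b, s + (t - i.1) * a), by
        have hle : i.1 ≤ t := Nat.lt_succ_iff.mp i.2
        zify [hle]
        ring⟩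
      left_inv := fun p => by
        obtain ⟨h1, h2, h3⟩ := key_facts ha hb hab hm₀ hs p.2
        apply Subtype.ext
        have e1 : m₀ + p.1.1 / b * b = p.1.1 := by
          conv_rhs => rw [← Nat.div_add_mod p.1.1 b, h1]
          ring
        have e2 : s + (t - p.1.1 / b) * a = p.1.2 := by
          have ht := congrArg (fun x => x - p.1.1 / b) h3
          simp only [Nat.add_sub_cancel_left] at ht
          rw [← ht]
          conv_rhs => rw [← Nat.div_add_mod p.1.2 a, h2]
          ring
        exact Prod.ext e1 e2
      right_inv := fun i => by
        apply Fin.ext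
        simp [Nat.add_mul_div_right _ _ hb, Nat.div_eq_of_lt hm₀] }
  rw [repCount, Nat.card_congr e, Nat.card_eq_fintype_card, Fintype.card_fin]

/-- For `k ≥ 1`, twice the sum of all elements of `R_k(a,b)` equals
`ab * (2abk - a - b)`. -/
theorem sk_eq (a b k : ℕ) (ha : 0 < a) (hb : 0 < b) (hab : Nat.Coprime a b) (hk : 1 ≤ k) :
    2 * (∑ᶠ j ∈ {j : ℕ | repCount a b j = k}, j) = a * b * (2 * a * b * k - a - b) := by
  obtain ⟨k', rfl⟩ : ∃ k', k = k' + 1 := ⟨k - 1, by omega⟩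
  have hset : {j : ℕ | repCount a b j = k' + 1} =
      ↑((Finset.range b ×ˢ Finset.range a).image
        (fun p : ℕ × ℕ => p.1 * a + p.2 * b + k' * (a * b))) := by
    ext j
    simp only [Set.mem_setOf_eq, Finset.coe_image, Set.mem_image, Finset.mem_coe,
      Finset.mem_product, Finset.mem_range]
    constructor
    · intro hj
      have hne : Nonempty {p : ℕ × ℕ // p.1 * a + p.2 * b = j} := by
        by_contra hemp
        rw [not_nonempty_iff] at hemp
        rw [repCount, Nat.card_of_isEmpty] at hj
        omega
      obtain ⟨⟨⟨m, n⟩, hmn⟩⟩ := hne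
      refine ⟨(m % b, n % a), ⟨Nat.mod_lt m hb, Nat.mod_lt n ha⟩, ?_⟩
      have hj' : j = m % b * a + n % a * b + (m / b + n / a) * (a * b) := by
        calc j = m * a + n * b := hmn.symm
          _ = (b * (m / b) + m % b) * a + (a * (n / a) + n % a) * b := by
              rw [Nat.div_add_mod, Nat.div_add_mod]
          _ = m % b * a + n % a * b + (m / b + n / a) * (a * b) := by ring
      have hrc := repCount_eq ha hb hab (m / b + n / a) (Nat.mod_lt m hb) (Nat.mod_lt n ha)
      rw [hj', hrc] at hj
      have ht : m / b + n / a = k' := by omega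
      rw [hj', ht]
    · rintro ⟨⟨m₀, s⟩, ⟨hm₀, hs⟩, rfl⟩
      exact repCount_eq ha hb hab k' hm₀ hs
  have hinj : ∀ p ∈ Finset.range b ×ˢ Finset.range a, ∀ q ∈ Finset.range b ×ˢ Finset.range a,
      (fun p : ℕ × ℕ => p.1 * a + p.2 * b + k' * (a * b)) p =
      (fun p : ℕ × ℕ => p.1 * a + p.2 * b + k' * (a * b)) q → p = q := by
    rintro ⟨m₀, s⟩ hp ⟨m₀', s'⟩ hq hfe
    simp only [Finset.mem_product, Finset.mem_range] at hp hq
    simp only at hfe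
    have heq : m₀' * a + s' * b = m₀ * a + s * b + 0 * (a * b) := by
      rw [zero_mul, add_zero]; linarith
    obtain ⟨e1, e2, -⟩ := key_facts ha hb hab hp.1 hp.2 heq
    rw [Nat.mod_eq_of_lt hq.1] at e1
    rw [Nat.mod_eq_of_lt hq.2] at e2
    simp [e1, e2]
  rw [hset, finsum_mem_coe_finset, Finset.sum_image hinj]
  have hsum : ∑ p ∈ Finset.range b ×ˢ Finset.range a,
      (p.1 * a + p.2 * b + k' * (a * b)) =
      (∑ m ∈ Finset.range b, m) * a * a + (∑ s ∈ Finset.range a, s) * b * b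
        + b * a * (k' * (a * b)) := by
    rw [Finset.sum_product]
    simp only [Finset.sum_add_distrib, Finset.sum_const, Finset.card_range, smul_eq_mul,
      ← Finset.mul_sum, ← Finset.sum_mul]
    ring
  rw [hsum]
  obtain ⟨a', rfl⟩ : ∃ a', a = a' + 1 := ⟨a - 1, by omega⟩
  obtain ⟨b', rfl⟩ : ∃ b', b = b' + 1 := ⟨b - 1, by omega⟩
  have g1 : (∑ m ∈ Finset.range (b' + 1), m) * 2 = (b' + 1) * b' := by
    simpa using Finset.sum_range_id_mul_two (b' + 1)
  have g2 : (∑ s ∈ Finset.range (a' + 1), s) * 2 = (a' + 1) * a' := by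
    simpa using Finset.sum_range_id_mul_two (a' + 1)
  have hle : (a' + 1) + (b' + 1) ≤ 2 * (a' + 1) * (b' + 1) * (k' + 1) := by
    have h1 : a' + 1 ≤ (a' + 1) * (b' + 1) := Nat.le_mul_of_pos_right _ (by omega)
    have h2 : b' + 1 ≤ (a' + 1) * (b' + 1) := Nat.le_mul_of_pos_left _ (by omega)
    have h3 : (a' + 1) * (b' + 1) ≤ (a' + 1) * (b' + 1) * (k' + 1) :=
      Nat.le_mul_of_pos_right _ (by omega)
    have e : 2 * (a' + 1) * (b' + 1) * (k' + 1)
        = (a' + 1) * (b' + 1) * (k' + 1) + (a' + 1) * (b' + 1) * (k' + 1) := by ring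
    rw [e]
    exact add_le_add (h1.trans h3) (h2.trans h3)
  rw [show 2 * (a' + 1) * (b' + 1) * (k' + 1) - (a' + 1) - (b' + 1)
      = 2 * (a' + 1) * (b' + 1) * (k' + 1) - ((a' + 1) + (b' + 1)) from by omega,
    Nat.mul_sub]
  symm
  apply Nat.sub_eq_of_eq_add
  have expand : 2 * ((∑ m ∈ Finset.range (b' + 1), m) * (a' + 1) * (a' + 1)
      + (∑ s ∈ Finset.range (a' + 1), s) * (b' + 1) * (b' + 1)
      + (b' + 1) * (a' + 1) * (k' * ((a' + 1) * (b' + 1))))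
      + (a' + 1) * (b' + 1) * ((a' + 1) + (b' + 1))
      = ((∑ m ∈ Finset.range (b' + 1), m) * 2) * ((a' + 1) * (a' + 1))
      + ((∑ s ∈ Finset.range (a' + 1), s) * 2) * ((b' + 1) * (b' + 1))
      + 2 * ((b' + 1) * (a' + 1) * (k' * ((a' + 1) * (b' + 1))))
      + (a' + 1) * (b' + 1) * ((a' + 1) + (b' + 1)) := by ring
  rw [expand, g1, g2]
  ring
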